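/- Let X ~ Bin(n,p) with 0 < p ≤ 1. Then E[1/X | X ≥ 1] ≤ (1/(p(n+1)))·(1 + 3/(p(n+2))). -/

import Mathlib

open Finset

lemma bin_sum_one' (n : ℕ) (p q : ℝ) (h : p + q = 1) :
    ∑ j ∈ Finset.range (n+1), (n.choose j : ℝ) * p ^ j * q ^ (n - j) = 1 := by
  have := add_pow p q n
  rw [h, one_pow] at this
  rw [this]
  exact Finset.sum_congr rfl fun j hj => by ring

lemma choose_shift1 (n k : ℕ) : (n+1) * n.choose (1+k) = (n+1).choose (2+k) * (2+k) := by
  have h2 := Nat.add_one_mul_choose_eq n (1+k)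
  rw [show 2+k = 1+k+1 from by omega]
  exact h2

theorem binomial_cond_expectation_inv_le (n : ℕ) (p : ℝ) (hp : 0 < p) (hp1 : p ≤ 1) :
    (∑ i ∈ Finset.Icc 1 n, (n.choose i : ℝ) * p ^ i * (1 - p) ^ (n - i) / i) /
        (1 - (1 - p) ^ n) ≤
      1 / (p * (n + 1)) * (1 + 3 / (p * (n + 2))) := by
  set q : ℝ := 1 - p with hq
  have hpq : p + q = 1 := by rw [hq]; ring
  have hq0 : 0 ≤ q := by rw [hq]; linarith
  have hq1 : q < 1 := by rw [hq]; linarith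
  have hn1 : (0:ℝ) < (n:ℝ) + 1 := by positivity
  have hn2 : (0:ℝ) < (n:ℝ) + 2 := by positivity
  rcases Nat.eq_zero_or_pos n with hn | hn
  · subst hn
    simp only [show Finset.Icc 1 0 = (∅ : Finset ℕ) from rfl, Finset.sum_empty, pow_zero,
      sub_self, zero_div]
    positivity
  -- n ≥ 1
  have hnR : (1:ℝ) ≤ (n:ℝ) := by exact_mod_cast hn
  have hqn : q ^ n < 1 := pow_lt_one₀ hq0 hq1 (by omega)
  have hqn0 : (0:ℝ) ≤ q ^ n := pow_nonneg hq0 n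
  have hP : 0 < 1 - q ^ n := by linarith
  rw [div_le_iff₀ hP]
  set A : ℝ := ∑ i ∈ Finset.Icc 1 n, (n.choose i : ℝ) * p ^ i * q ^ (n - i) / ((i:ℝ)+1) with hA
  set B : ℝ := ∑ i ∈ Finset.Icc 1 n,
      (n.choose i : ℝ) * p ^ i * q ^ (n - i) / (((i:ℝ)+1)*((i:ℝ)+2)) with hB
  -- step 1 : pointwise bound
  have step1 : (∑ i ∈ Finset.Icc 1 n, (n.choose i : ℝ) * p ^ i * q ^ (n - i) / i)
      ≤ A + 3 * B := by
    rw [hA, hB, Finset.mul_sum, ← Finset.sum_add_distrib]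
    refine Finset.sum_le_sum fun i hi => ?_
    have hi1 : 1 ≤ i := (Finset.mem_Icc.mp hi).1
    have hi1' : (1:ℝ) ≤ (i:ℝ) := by exact_mod_cast hi1
    have hc : (0:ℝ) ≤ (n.choose i : ℝ) * p ^ i * q ^ (n - i) := by positivity
    set c : ℝ := (n.choose i : ℝ) * p ^ i * q ^ (n - i)
    have hipos : (0:ℝ) < (i:ℝ) := by linarith
    rw [← sub_nonneg]
    have : c/((i:ℝ)+1) + 3*(c/(((i:ℝ)+1)*((i:ℝ)+2))) - c/i
        = c * ((2*(i:ℝ) - 2) / ((i:ℝ)*((i:ℝ)+1)*((i:ℝ)+2))) := by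
      field_simp
      ring
    rw [this]
    exact mul_nonneg hc (div_nonneg (by linarith) (by positivity))
  -- step 2 : A identity
  have claimA : p * ((n:ℝ)+1) * A = 1 - q ^ (n+1) - ((n:ℝ)+1) * p * q ^ n := by
    rw [hA, Finset.mul_sum]
    have reidx : ∑ i ∈ Finset.Icc 1 n,
        p * ((n:ℝ)+1) * ((n.choose i : ℝ) * p ^ i * q ^ (n - i) / ((i:ℝ)+1))
        = ∑ j ∈ Finset.Ico 2 (n+2), ((n+1).choose j : ℝ) * p ^ j * q ^ (n+1-j) := by
      rw [show Finset.Icc 1 n = Finset.Ico 1 (n+1) from rfl]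
      rw [Finset.sum_Ico_eq_sum_range, Finset.sum_Ico_eq_sum_range]
      refine Finset.sum_congr rfl fun k hk => ?_
      have hch : ((n:ℝ)+1) * (n.choose (1+k) : ℝ) = ((n+1).choose (2+k) : ℝ) * ((2:ℝ)+k) := by
        exact_mod_cast congrArg (Nat.cast : ℕ → ℝ) (choose_shift1 n k)
      have hexp : n + 1 - (2 + k) = n - (1 + k) := by omega
      have hpow : p ^ (2+k) = p * p ^ (1+k) := by ring
      rw [hexp, hpow]
      have hcast : ((1+k:ℕ):ℝ) + 1 = (2:ℝ)+(k:ℝ) := by push_cast; ring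
      rw [hcast]
      have h2k : ((2:ℝ)+(k:ℝ)) ≠ 0 := by positivity
      field_simp
      linear_combination (q ^ (n - (1+k))) * hch
    rw [reidx]
    have full := bin_sum_one' (n+1) p q hpq
    have split : ∑ j ∈ Finset.Ico 0 2, ((n+1).choose j : ℝ) * p ^ j * q ^ (n+1-j)
        + ∑ j ∈ Finset.Ico 2 (n+2), ((n+1).choose j : ℝ) * p ^ j * q ^ (n+1-j)
        = ∑ j ∈ Finset.Ico 0 (n+2), ((n+1).choose j : ℝ) * p ^ j * q ^ (n+1-j) :=
      Finset.sum_Ico_consecutive _ (by omega) (by omega)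
    rw [show Finset.Ico 0 (n+2) = Finset.range (n+2) from by rw [Finset.range_eq_Ico], full] at split
    have h01 : ∑ j ∈ Finset.Ico 0 2, ((n+1).choose j : ℝ) * p ^ j * q ^ (n+1-j)
        = q ^ (n+1) + ((n:ℝ)+1) * p * q ^ n := by
      rw [show Finset.Ico 0 2 = ({0, 1} : Finset ℕ) from rfl]
      rw [Finset.sum_insert (by decide), Finset.sum_singleton]
      simp only [Nat.choose_one_right, Nat.choose_zero_right, pow_zero, pow_one,
        Nat.add_sub_cancel, Nat.cast_one, Nat.cast_add, one_mul]
      push_cast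
      ring_nf
    linarith
  -- step 3 : B identity
  have claimB : p^2 * ((n:ℝ)+1) * ((n:ℝ)+2) * B
      = 1 - q ^ (n+2) - ((n:ℝ)+2) * p * q ^ (n+1)
        - ((n+2).choose 2 : ℝ) * p^2 * q ^ n := by
    rw [hB, Finset.mul_sum]
    have reidx : ∑ i ∈ Finset.Icc 1 n,
        p^2 * ((n:ℝ)+1) * ((n:ℝ)+2) *
          ((n.choose i : ℝ) * p ^ i * q ^ (n - i) / (((i:ℝ)+1)*((i:ℝ)+2)))
        = ∑ j ∈ Finset.Ico 3 (n+3), ((n+2).choose j : ℝ) * p ^ j * q ^ (n+2-j) := by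
      rw [show Finset.Icc 1 n = Finset.Ico 1 (n+1) from rfl]
      rw [Finset.sum_Ico_eq_sum_range, Finset.sum_Ico_eq_sum_range]
      refine Finset.sum_congr rfl fun k hk => ?_
      have h1 := choose_shift1 n k
      have h2 := choose_shift1 (n+1) (1+k)
      rw [show 2+(1+k) = 3+k from by omega, show 1+(1+k) = 2+k from by omega,
        show n+1+1 = n+2 from by omega] at h2
      have hchN : (n+1)*(n+2)*(n.choose (1+k)) = (n+2).choose (3+k) * ((2+k)*(3+k)) := by
        calc (n+1)*(n+2)*(n.choose (1+k)) = (n+2)*((n+1)*n.choose (1+k)) := by ring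
          _ = (n+2)*((n+1).choose (2+k)*(2+k)) := by rw [h1]
          _ = ((n+2)*(n+1).choose (2+k))*(2+k) := by ring
          _ = ((n+2).choose (3+k)*(3+k))*(2+k) := by rw [h2]
          _ = _ := by ring
      have hch : ((n:ℝ)+1) * ((n:ℝ)+2) * (n.choose (1+k) : ℝ)
          = ((n+2).choose (3+k) : ℝ) * (((2:ℝ)+k)*((3:ℝ)+k)) := by
        exact_mod_cast congrArg (Nat.cast : ℕ → ℝ) hchN
      have hexp : n + 2 - (3 + k) = n - (1 + k) := by omega
      have hpow : p ^ (3+k) = p^2 * p ^ (1+k) := by ring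
      rw [hexp, hpow]
      have hcast1 : ((1+k:ℕ):ℝ) + 1 = (2:ℝ)+(k:ℝ) := by push_cast; ring
      have hcast2 : ((1+k:ℕ):ℝ) + 2 = (3:ℝ)+(k:ℝ) := by push_cast; ring
      rw [hcast1, hcast2]
      have h2k : ((2:ℝ)+(k:ℝ)) ≠ 0 := by positivity
      have h3k : ((3:ℝ)+(k:ℝ)) ≠ 0 := by positivity
      field_simp
      linear_combination (q ^ (n - (1+k))) * hch
    rw [reidx]
    have full := bin_sum_one' (n+2) p q hpq
    have split : ∑ j ∈ Finset.Ico 0 3, ((n+2).choose j : ℝ) * p ^ j * q ^ (n+2-j)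
        + ∑ j ∈ Finset.Ico 3 (n+3), ((n+2).choose j : ℝ) * p ^ j * q ^ (n+2-j)
        = ∑ j ∈ Finset.Ico 0 (n+3), ((n+2).choose j : ℝ) * p ^ j * q ^ (n+2-j) :=
      Finset.sum_Ico_consecutive _ (by omega) (by omega)
    rw [show Finset.Ico 0 (n+3) = Finset.range (n+3) from by rw [Finset.range_eq_Ico], full] at split
    have h012 : ∑ j ∈ Finset.Ico 0 3, ((n+2).choose j : ℝ) * p ^ j * q ^ (n+2-j)
        = q ^ (n+2) + ((n:ℝ)+2) * p * q ^ (n+1) + ((n+2).choose 2 : ℝ) * p^2 * q ^ n := by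
      rw [show Finset.Ico 0 3 = ({0, 1, 2} : Finset ℕ) from rfl]
      rw [Finset.sum_insert (by decide), Finset.sum_insert (by decide), Finset.sum_singleton]
      simp only [Nat.choose_one_right, Nat.choose_zero_right, pow_zero, pow_one,
        Nat.cast_one, Nat.cast_add, one_mul]
      push_cast
      ring_nf
    linarith
  -- bounds
  have hc2 : (1:ℝ) ≤ ((n+2).choose 2 : ℝ) := by
    have : 0 < (n+2).choose 2 := Nat.choose_pos (by omega)
    exact_mod_cast this
  have hqe1 : q ^ (n+1) = q ^ n * q := by ring
  have hqe2 : q ^ (n+2) = q ^ n * q^2 := by ring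
  have boundA : p * ((n:ℝ)+1) * A ≤ 1 - q ^ n := by
    rw [claimA]
    nlinarith [mul_nonneg hqn0 (mul_nonneg (Nat.cast_nonneg n) hp.le)]
  have boundB : p^2 * ((n:ℝ)+1) * ((n:ℝ)+2) * B ≤ 1 - q ^ n := by
    rw [claimB, hqe1, hqe2]
    have hsq : q^2 + 2*p*q + p^2 = 1 := by linear_combination (p+q+1)*hpq
    have key : (0:ℝ) ≤ q^n * ((n:ℝ)*p*q + ((((n+2).choose 2 : ℕ) : ℝ)-1)*p^2) :=
      mul_nonneg hqn0 (add_nonneg (by positivity)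
        (mul_nonneg (by linarith) (by positivity)))
    have exp2 : 1 - q^n*q^2 - ((n:ℝ)+2)*p*(q^n*q) - (((n+2).choose 2 : ℕ) : ℝ)*p^2*q^n
        = 1 - q^n - q^n*((n:ℝ)*p*q + ((((n+2).choose 2 : ℕ) : ℝ)-1)*p^2) := by
      linear_combination (-(q^n))*hsq
    linarith [exp2, key]
  have hA2 : A ≤ (1 - q ^ n) / (p * ((n:ℝ)+1)) := by
    rw [le_div_iff₀ (by positivity)]
    linarith
  have hB2 : B ≤ (1 - q ^ n) / (p^2 * ((n:ℝ)+1) * ((n:ℝ)+2)) := by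
    rw [le_div_iff₀ (by positivity)]
    linarith
  have hkey : (1 - q ^ n) / (p * ((n:ℝ)+1))
      + 3 * ((1 - q ^ n) / (p^2 * ((n:ℝ)+1) * ((n:ℝ)+2)))
      = 1 / (p * ((n:ℝ) + 1)) * (1 + 3 / (p * ((n:ℝ) + 2))) * (1 - q ^ n) := by
    field_simp
  linarith
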